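/- For any two density matrices ρ and σ on an n-qubit system A and any single-qubit pure state |r⟩ on a qubit R, the trace distance D(ρ,σ) = (1/2)‖ρ−σ‖₁ equals the maximum over unitaries U on AR of Tr[(I_A ⊗ |0⟩⟨0|_R) U (ρ ⊗ |r⟩⟨r|) U†] − Tr[(I_A ⊗ |0⟩⟨0|_R) U (σ ⊗ |r⟩⟨r|) U†]. -/

import Mathlib

open Matrix Kronecker
open scoped ComplexOrder

noncomputable def traceNorm {n : Type*} [Fintype n] [DecidableEq n] (H : Matrix n n ℂ) : ℝ :=
  if h : H.IsHermitian then ∑ i, |h.eigenvalues i| else 0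

noncomputable def traceDist {n : Type*} [Fintype n] [DecidableEq n] (ρ σ : Matrix n n ℂ) : ℝ :=
  traceNorm (ρ - σ) / 2

namespace TDaux

variable {K : Type*} [Fintype K] [DecidableEq K]

lemma star_kron {l m : Type*} [Fintype l] [Fintype m] [DecidableEq l] [DecidableEq m]
    (A : Matrix l l ℂ) (B : Matrix m m ℂ) :
    star (A ⊗ₖ B) = star A ⊗ₖ star B := by
  ext ⟨i, j⟩ ⟨k, l⟩
  simp [Matrix.star_apply, kroneckerMap_apply, Matrix.conjTranspose_apply]

lemma sub_kron {l m : Type*} [Fintype l] [Fintype m]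
    (A B : Matrix l l ℂ) (C : Matrix m m ℂ) :
    (A - B) ⊗ₖ C = A ⊗ₖ C - B ⊗ₖ C := by
  ext ⟨i, j⟩ ⟨k, l⟩
  simp [kroneckerMap_apply, sub_mul]

lemma trace_diag_conj (p d : K → ℂ) (B : Matrix K K ℂ) :
    (diagonal p * (B * diagonal d * star B)).trace
      = ∑ k, (∑ m, (starRingEnd ℂ) (B m k) * p m * B m k) * d k := by
  have h1 : diagonal p * (B * diagonal d * star B)
      = (diagonal p * B * diagonal d) * star B := by
    rw [← Matrix.mul_assoc, ← Matrix.mul_assoc]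
  rw [h1, Matrix.trace_mul_comm]
  have h2 : star B * (diagonal p * B * diagonal d) = (star B * diagonal p * B) * diagonal d := by
    rw [← Matrix.mul_assoc, ← Matrix.mul_assoc]
  rw [h2]
  rw [Matrix.trace]
  congr 1
  funext k
  rw [Matrix.diag_apply, Matrix.mul_diagonal]
  congr 1
  rw [Matrix.mul_apply]
  congr 1
  funext m
  rw [Matrix.mul_diagonal, Matrix.star_apply, Complex.star_def]

lemma trace_diag_conj_real (p d : K → ℝ) (B : Matrix K K ℂ) :
    (diagonal (fun k => (p k : ℂ)) * (B * diagonal (fun k => (d k : ℂ)) * star B)).trace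
      = ((∑ k, (∑ m, p m * Complex.normSq (B m k)) * d k : ℝ) : ℂ) := by
  rw [trace_diag_conj]
  push_cast
  congr 1
  funext k
  congr 1
  congr 1
  funext m
  rw [Complex.normSq_eq_conj_mul_self]
  ring

lemma col_normSq_one {B : Matrix K K ℂ} (hB : B ∈ Matrix.unitaryGroup K ℂ) (k : K) :
    ∑ m, Complex.normSq (B m k) = 1 := by
  have h := Matrix.mem_unitaryGroup_iff'.mp hB
  have h2 : (star B * B) k k = 1 := by rw [h]; simp
  rw [Matrix.mul_apply] at h2
  have h3 : ∀ m, (star B) k m * B m k = ((Complex.normSq (B m k) : ℂ)) := by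
    intro m
    rw [Matrix.star_apply, Complex.star_def, Complex.normSq_eq_conj_mul_self]
  rw [Finset.sum_congr rfl (fun m _ => h3 m)] at h2
  rw [← Complex.ofReal_sum] at h2
  exact_mod_cast h2

end TDaux

open TDaux

/-- the trace distance `D(ρ,σ)` equals the maximum over unitaries `U` on `AR`
of the difference of the two single-qubit measurement outcomes. -/
theorem traceDist_eq_max_unitary_difference (n : ℕ)
    (ρ σ : Matrix (Fin (2 ^ n)) (Fin (2 ^ n)) ℂ)
    (hρ : ρ.PosSemidef) (hσ : σ.PosSemidef) (hρt : ρ.trace = 1) (hσt : σ.trace = 1)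
    (r : Fin 2 → ℂ) (hr : star r ⬝ᵥ r = 1) :
    IsGreatest {x : ℝ | ∃ U ∈ Matrix.unitaryGroup (Fin (2 ^ n) × Fin 2) ℂ,
        (((1 : Matrix (Fin (2 ^ n)) (Fin (2 ^ n)) ℂ) ⊗ₖ
            Matrix.single (0 : Fin 2) (0 : Fin 2) (1 : ℂ)) *
          (U * (ρ ⊗ₖ Matrix.vecMulVec r (star r)) * star U)).trace -
        (((1 : Matrix (Fin (2 ^ n)) (Fin (2 ^ n)) ℂ) ⊗ₖ
            Matrix.single (0 : Fin 2) (0 : Fin 2) (1 : ℂ)) *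
          (U * (σ ⊗ₖ Matrix.vecMulVec r (star r)) * star U)).trace = (x : ℂ)}
      (traceDist ρ σ) := by
  classical
  have hΔ : (ρ - σ).IsHermitian := hρ.1.sub hσ.1
  set lam : Fin (2 ^ n) → ℝ := hΔ.eigenvalues with hlam
  -- trace distance value
  have hTD : traceDist ρ σ = (∑ i, |lam i|) / 2 := by
    rw [traceDist, traceNorm, dif_pos hΔ]
  -- sum of eigenvalues is zero
  have hsum0 : ∑ i, lam i = 0 := by
    have htr : (ρ - σ).trace = 0 := by rw [Matrix.trace_sub, hρt, hσt, sub_self]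
    have hst := hΔ.spectral_theorem
    have h1 : (ρ - σ).trace =
        (Matrix.diagonal (RCLike.ofReal ∘ lam) *
          ((star (hΔ.eigenvectorUnitary : Matrix (Fin (2^n)) (Fin (2^n)) ℂ)) *
            (hΔ.eigenvectorUnitary : Matrix (Fin (2^n)) (Fin (2^n)) ℂ))).trace := by
      conv_lhs => rw [hst, Unitary.conjStarAlgAut_apply]
      rw [Matrix.trace_mul_comm, ← Matrix.mul_assoc, ← Matrix.mul_assoc]
      rw [Matrix.trace_mul_comm]
      rw [← Matrix.mul_assoc]
    rw [Matrix.mem_unitaryGroup_iff'.mp hΔ.eigenvectorUnitary.2, Matrix.mul_one,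
      Matrix.trace_diagonal] at h1
    rw [htr] at h1
    have : ((∑ i, lam i : ℝ) : ℂ) = 0 := by
      rw [Complex.ofReal_sum]
      exact h1.symm
    exact_mod_cast this
  -- inner product hypothesis expanded
  have hr' : (starRingEnd ℂ) (r 0) * r 0 + (starRingEnd ℂ) (r 1) * r 1 = 1 := by
    simpa [dotProduct, Fin.sum_univ_two, Pi.star_apply, Complex.star_def] using hr
  set VA : Matrix (Fin (2 ^ n)) (Fin (2 ^ n)) ℂ := (↑hΔ.eigenvectorUnitary : Matrix (Fin (2 ^ n)) (Fin (2 ^ n)) ℂ) with hVA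
  have hVAu : VA ∈ Matrix.unitaryGroup (Fin (2 ^ n)) ℂ := hΔ.eigenvectorUnitary.2
  set VR : Matrix (Fin 2) (Fin 2) ℂ :=
    !![r 0, -((starRingEnd ℂ) (r 1)); r 1, (starRingEnd ℂ) (r 0)] with hVRdef
  have hVRu : VR ∈ Matrix.unitaryGroup (Fin 2) ℂ := by
    rw [Matrix.mem_unitaryGroup_iff]
    ext i j
    fin_cases i <;> fin_cases j <;>
      simp [Matrix.mul_apply, Fin.sum_univ_two, hVRdef, Matrix.star_apply, Complex.star_def,
        Matrix.one_apply] <;>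
      first
        | linear_combination hr'
        | ring
  set V : Matrix (Fin (2 ^ n) × Fin 2) (Fin (2 ^ n) × Fin 2) ℂ := VA ⊗ₖ VR with hVdef
  have hVu : V ∈ Matrix.unitaryGroup (Fin (2 ^ n) × Fin 2) ℂ := by
    rw [Matrix.mem_unitaryGroup_iff, hVdef, star_kron, ← Matrix.mul_kronecker_mul,
      Matrix.mem_unitaryGroup_iff.mp hVAu, Matrix.mem_unitaryGroup_iff.mp hVRu,
      Matrix.one_kronecker_one]
  set p' : Fin (2 ^ n) × Fin 2 → ℝ := fun k => if k.2 = 0 then 1 else 0 with hp'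
  set d' : Fin (2 ^ n) × Fin 2 → ℝ := fun k => if k.2 = 0 then lam k.1 else 0 with hd'
  have hE : Matrix.single (0 : Fin 2) (0 : Fin 2) (1 : ℂ)
      = Matrix.diagonal (fun j => if j = 0 then (1:ℂ) else 0) := by
    ext i j
    fin_cases i <;> fin_cases j <;> simp [Matrix.single, Matrix.diagonal]
  have hP : ((1 : Matrix (Fin (2 ^ n)) (Fin (2 ^ n)) ℂ) ⊗ₖ
        Matrix.single (0 : Fin 2) (0 : Fin 2) (1 : ℂ))
      = Matrix.diagonal (fun k => ((p' k : ℝ) : ℂ)) := by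
    rw [hE, ← Matrix.diagonal_one, Matrix.diagonal_kronecker_diagonal]
    refine congrArg Matrix.diagonal (funext fun k => ?_)
    by_cases h : k.2 = 0 <;> simp [hp', h]
  have hrrstar : Matrix.vecMulVec r (star r)
      = VR * Matrix.diagonal (fun j => if j = 0 then (1:ℂ) else 0) * star VR := by
    ext i j
    fin_cases i <;> fin_cases j <;>
      simp [Matrix.mul_apply, Fin.sum_univ_two, Matrix.vecMulVec_apply, Matrix.star_apply,
        Complex.star_def, hVRdef, Pi.star_apply, Matrix.vecMul_diagonal,
        Matrix.diagonal_apply]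
  have hDelta : (ρ - σ) ⊗ₖ Matrix.vecMulVec r (star r)
      = V * Matrix.diagonal (fun k => ((d' k : ℝ) : ℂ)) * star V := by
    conv_lhs => rw [hΔ.spectral_theorem, Unitary.conjStarAlgAut_apply, hrrstar]
    rw [Matrix.mul_kronecker_mul, Matrix.mul_kronecker_mul, Matrix.diagonal_kronecker_diagonal,
      ← hVA, ← star_kron, ← hVdef]
    have hfun : (fun k : Fin (2 ^ n) × Fin 2 =>
        (RCLike.ofReal ∘ hΔ.eigenvalues) k.1 * (if k.2 = 0 then (1:ℂ) else 0))
        = fun k => ((d' k : ℝ) : ℂ) := by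
      funext k
      by_cases h : k.2 = 0 <;> simp [hd', h, Function.comp, hlam]
    rw [hfun]
  -- master formula
  have master : ∀ U ∈ Matrix.unitaryGroup (Fin (2 ^ n) × Fin 2) ℂ,
      (((1 : Matrix (Fin (2 ^ n)) (Fin (2 ^ n)) ℂ) ⊗ₖ
            Matrix.single (0 : Fin 2) (0 : Fin 2) (1 : ℂ)) *
          (U * (ρ ⊗ₖ Matrix.vecMulVec r (star r)) * star U)).trace -
        (((1 : Matrix (Fin (2 ^ n)) (Fin (2 ^ n)) ℂ) ⊗ₖ
            Matrix.single (0 : Fin 2) (0 : Fin 2) (1 : ℂ)) *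
          (U * (σ ⊗ₖ Matrix.vecMulVec r (star r)) * star U)).trace
        = ((∑ k, (∑ m, p' m * Complex.normSq ((U * V) m k)) * d' k : ℝ) : ℂ) := by
    intro U hU
    rw [← Matrix.trace_sub, ← Matrix.mul_sub, ← Matrix.sub_mul, ← Matrix.mul_sub,
      ← sub_kron, hDelta, hP]
    have hassoc : U * (V * Matrix.diagonal (fun k => ((d' k : ℝ) : ℂ)) * star V) * star U
        = (U * V) * Matrix.diagonal (fun k => ((d' k : ℝ) : ℂ)) * star (U * V) := by
      rw [Matrix.star_mul]
      simp only [Matrix.mul_assoc]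
    rw [hassoc, trace_diag_conj_real]
  -- value of the "positive part" sum
  have hifval : ∀ y : ℝ, (if 0 < y then y else 0) = (|y| + y) / 2 := by
    intro y
    rcases lt_or_ge 0 y with h | h
    · rw [if_pos h, abs_of_pos h]; ring
    · rw [if_neg (not_lt.mpr h), abs_of_nonpos h]; ring
  have hSd : ∑ k : Fin (2 ^ n) × Fin 2, (if 0 < d' k then d' k else 0) = traceDist ρ σ := by
    rw [Fintype.sum_prod_type]
    have hrow : ∀ i : Fin (2 ^ n),
        (∑ j : Fin 2, if 0 < d' (i, j) then d' (i, j) else 0) = (|lam i| + lam i) / 2 := by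
      intro i
      rw [Fin.sum_univ_two]
      have h0 : d' (i, 0) = lam i := by simp [hd']
      have h1 : d' (i, 1) = 0 := by simp [hd']
      rw [h0, h1, hifval, if_neg (lt_irrefl 0), add_zero]
    rw [Finset.sum_congr rfl fun i _ => hrow i, ← Finset.sum_div, Finset.sum_add_distrib,
      hsum0, add_zero, hTD]
  constructor
  · -- membership : exhibit a unitary achieving the trace distance
    set g : Fin (2 ^ n) → Fin 2 := fun i => if 0 < lam i then 0 else 1 with hg
    set π : Fin (2 ^ n) × Fin 2 → Fin (2 ^ n) × Fin 2 := fun k => (k.1, k.2 + g k.1) with hπ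
    have hadd : ∀ j y : Fin 2, j + y + y = j := by decide
    have hππ : ∀ k, π (π k) = k := by
      rintro ⟨i, j⟩
      simp only [hπ]
      exact Prod.ext rfl (hadd j (g i))
    have hπinj : Function.Injective π := Function.LeftInverse.injective hππ
    set W : Matrix (Fin (2 ^ n) × Fin 2) (Fin (2 ^ n) × Fin 2) ℂ :=
      Matrix.of (fun k l => if k = π l then 1 else 0) with hW
    have hWu : W ∈ Matrix.unitaryGroup (Fin (2 ^ n) × Fin 2) ℂ := by
      rw [Matrix.mem_unitaryGroup_iff']
      ext k l
      rw [Matrix.mul_apply]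
      have hterm : ∀ m, (star W) k m * W m l
          = if m = π k then (if m = π l then (1:ℂ) else 0) else 0 := by
        intro m
        rw [Matrix.star_apply]
        simp only [hW, Matrix.of_apply]
        by_cases h1 : m = π k <;> by_cases h2 : m = π l <;> simp [h1, h2]
      rw [Finset.sum_congr rfl fun m _ => hterm m]
      simp [Finset.sum_ite_eq', Matrix.one_apply, hπinj.eq_iff]
    have hUmem : W * star V ∈ Matrix.unitaryGroup (Fin (2 ^ n) × Fin 2) ℂ :=
      mul_mem hWu (Unitary.star_mem hVu)
    refine ⟨W * star V, hUmem, ?_⟩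
    have hUV : (W * star V) * V = W := by
      rw [Matrix.mul_assoc, Matrix.mem_unitaryGroup_iff'.mp hVu, Matrix.mul_one]
    rw [master (W * star V) hUmem, hUV, Complex.ofReal_inj]
    have hval : ∀ k, (∑ m, p' m * Complex.normSq (W m k)) = p' (π k) := by
      intro k
      have hterm : ∀ m, p' m * Complex.normSq (W m k) = if m = π k then p' m else 0 := by
        intro m
        by_cases h : m = π k <;> simp [hW, h]
      rw [Finset.sum_congr rfl fun m _ => hterm m, Finset.sum_ite_eq']
      simp
    rw [Finset.sum_congr rfl fun k _ => by rw [hval k]]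
    rw [← hSd]
    refine Finset.sum_congr rfl fun k _ => ?_
    rcases k with ⟨i, j⟩
    fin_cases j
    · by_cases h : 0 < lam i
      · simp [hπ, hp', hd', hg, h, zero_add]
      · simp [hπ, hp', hd', hg, h, zero_add]
    · simp [hd', hp', hπ]
  · -- upper bound
    rintro x ⟨U, hU, hx⟩
    rw [master U hU] at hx
    have hx' : x = ∑ k, (∑ m, p' m * Complex.normSq ((U * V) m k)) * d' k := by
      exact_mod_cast hx.symm
    set c : Fin (2 ^ n) × Fin 2 → ℝ :=
      fun k => ∑ m, p' m * Complex.normSq ((U * V) m k) with hc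
    have hBu : U * V ∈ Matrix.unitaryGroup (Fin (2 ^ n) × Fin 2) ℂ := mul_mem hU hVu
    have hc0 : ∀ k, 0 ≤ c k := by
      intro k
      refine Finset.sum_nonneg fun m _ => mul_nonneg ?_ (Complex.normSq_nonneg _)
      by_cases h : m.2 = 0 <;> simp [hp', h]
    have hc1 : ∀ k, c k ≤ 1 := by
      intro k
      calc c k ≤ ∑ m, Complex.normSq ((U * V) m k) := by
            refine Finset.sum_le_sum fun m _ => ?_
            have hple : p' m ≤ 1 := by by_cases h : m.2 = 0 <;> simp [hp', h]
            calc p' m * Complex.normSq ((U * V) m k)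
                ≤ 1 * Complex.normSq ((U * V) m k) :=
                  mul_le_mul_of_nonneg_right hple (Complex.normSq_nonneg _)
              _ = _ := one_mul _
        _ = 1 := col_normSq_one hBu k
    rw [hx', ← hSd]
    refine Finset.sum_le_sum fun k _ => ?_
    rcases lt_or_ge 0 (d' k) with h | h
    · rw [if_pos h]
      calc c k * d' k ≤ 1 * d' k := mul_le_mul_of_nonneg_right (hc1 k) h.le
        _ = d' k := one_mul _
    · rw [if_neg (not_lt.mpr h)]
      calc c k * d' k ≤ c k * 0 := mul_le_mul_of_nonneg_left h (hc0 k)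
        _ = 0 := mul_zero _
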